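/- For every real ε > 0, no individually rational mechanism provides an approximation ratio of at most (1 − ε)·c_int: for every ε > 0 and every individually rational mechanism ℳ there exists an IKEP instance I whose compatibility graph contains at least one international Γ-cycle such that opt(I) > (1 − ε) · c_int(I) · SW(ℳ(I)). -/

import Mathlib

open scoped Classical

/-- An `n`-partitioned compatibility graph: a finite directed graph on a finite
set of natural-number vertices, without self-loops, whose vertex set is
partitioned into `n` nonempty countries. -/
structure PartGraph (n : ℕ) where
  verts : Finset ℕ
  arcs : Finset (ℕ × ℕ)
  arcs_mem : ∀ p ∈ arcs, p.1 ∈ verts ∧ p.2 ∈ verts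
  no_loops : ∀ v, (v, v) ∉ arcs
  country : ℕ → Fin n
  country_nonempty : ∀ i : Fin n, ∃ v ∈ verts, country v = i

/-- Cyclic access to the entries of a list. -/
def cyc (l : List ℕ) (k : ℕ) : ℕ := l.getD (k % l.length) 0

/-- `l` is a (directed) cycle of `G`: a cyclic sequence of at least two distinct
vertices, consecutive ones (cyclically) joined by arcs. -/
def IsCycle {n : ℕ} (G : PartGraph n) (l : List ℕ) : Prop :=
  2 ≤ l.length ∧ l.Nodup ∧ (∀ v ∈ l, v ∈ G.verts) ∧
    ∀ k < l.length, (cyc l k, cyc l (k + 1)) ∈ G.arcs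

/-- All vertices of `l` belong to country `i`. -/
def IsNationalTo {n : ℕ} (G : PartGraph n) (l : List ℕ) (i : Fin n) : Prop :=
  ∀ v ∈ l, G.country v = i

/-- A national cycle: all vertices in one country. -/
def IsNational {n : ℕ} (G : PartGraph n) (l : List ℕ) : Prop :=
  ∃ i, IsNationalTo G l i

/-- An international cycle: not national (equivalently, for cycles, it contains
an international arc). -/
def IsInternational {n : ℕ} (G : PartGraph n) (l : List ℕ) : Prop :=
  ¬ IsNational G l

/-- Position `k` (taken cyclically) is the start of a `V_i`-segment of `l`:
the vertex there is in country `i` but the cyclically preceding one is not. -/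
def segStart {n : ℕ} (G : PartGraph n) (l : List ℕ) (i : Fin n) (k : ℕ) : Prop :=
  G.country (cyc l k) = i ∧ G.country (cyc l (k + l.length - 1)) ≠ i

/-- The size of the run of consecutive (cyclic) positions of `l`, starting at
position `k`, whose vertices are in country `i`.  At a segment start this is
exactly the size of that `V_i`-segment. -/
noncomputable def runLen {n : ℕ} (G : PartGraph n) (l : List ℕ) (i : Fin n) (k : ℕ) : ℕ :=
  ((Finset.range l.length).filter
    fun j => ∀ j' ≤ j, G.country (cyc l (k + j')) = i).card

/-- The number of `V_i`-segments of the cycle `l`. -/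
noncomputable def numSegs {n : ℕ} (G : PartGraph n) (l : List ℕ) (i : Fin n) : ℕ :=
  ((Finset.range l.length).filter fun k => segStart G l i k).card

/-- A set `Γ` of country-specific parameters for `n` countries. -/
structure Params (n : ℕ) where
  icl : ℕ∞
  ncl : Fin n → ℕ∞
  iss : Fin n → ℕ∞
  isn : Fin n → ℕ∞
  icl_ne_one : icl ≠ 1
  ncl_ne_one : ∀ i, ncl i ≠ 1
  iss_pos : ∀ i, 1 ≤ iss i
  isn_pos : ∀ i, 1 ≤ isn i

/-- `l` is a `Γ`-cycle of `(G, 𝒱)`. -/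
def IsGammaCycle {n : ℕ} (G : PartGraph n) (Γ : Params n) (l : List ℕ) : Prop :=
  IsCycle G l ∧
    ((∃ i, IsNationalTo G l i ∧ (l.length : ℕ∞) ≤ Γ.ncl i) ∨
      (IsInternational G l ∧ (l.length : ℕ∞) ≤ Γ.icl ∧
        (∀ i, ∀ k < l.length, segStart G l i k → (runLen G l i k : ℕ∞) ≤ Γ.iss i) ∧
        (∀ i, (numSegs G l i : ℕ∞) ≤ Γ.isn i)))

/-- A cycle packing of `G`: a set of pairwise vertex-disjoint cycles. -/
def IsPacking {n : ℕ} (G : PartGraph n) (P : Finset (List ℕ)) : Prop :=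
  (∀ l ∈ P, IsCycle G l) ∧
    ∀ l ∈ P, ∀ l' ∈ P, l ≠ l' → ∀ v ∈ l, v ∉ l'

/-- The size of a cycle packing: total number of arcs (= vertices) of its cycles. -/
def packSize (P : Finset (List ℕ)) : ℕ := ∑ l ∈ P, l.length

/-- A `Γ`-cycle packing of `(G, 𝒱)`. -/
def IsGammaPackingG {n : ℕ} (G : PartGraph n) (Γ : Params n) (P : Finset (List ℕ)) : Prop :=
  IsPacking G P ∧ ∀ l ∈ P, IsGammaCycle G Γ l


/-- An IKEP instance `I = ⟨G, 𝒱, Γ⟩`. -/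
structure IKEP where
  n : ℕ
  npos : 1 ≤ n
  G : PartGraph n
  prm : Params n

/-- A `Γ`-cycle packing of the instance `I`. -/
def IsGammaPacking (I : IKEP) (P : Finset (List ℕ)) : Prop :=
  IsGammaPackingG I.G I.prm P

/-- The utility `u_i(C)` of country `i` from the cycle `C`: the number of arcs
of `C` entering country `i`, i.e. the number of vertices of `C` in country `i`. -/
noncomputable def cycUtil {n : ℕ} (G : PartGraph n) (i : Fin n) (l : List ℕ) : ℕ :=
  (l.filter fun v => G.country v = i).length

/-- The utility `u_i(𝒞)` of country `i` from a cycle packing. -/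
noncomputable def packUtil {n : ℕ} (G : PartGraph n) (i : Fin n) (P : Finset (List ℕ)) : ℕ :=
  ∑ l ∈ P, cycUtil G i l

/-- `opt(I)`: the maximum size of a `Γ`-cycle packing of `G`. -/
noncomputable def optSize (I : IKEP) : ℕ :=
  sSup {m | ∃ P, IsGammaPacking I P ∧ packSize P = m}

/-- `nat_i(I)`: the maximum size of a `Γ`-cycle packing of the subgraph
`G[V_i]` induced by country `i` (all its cycles are national, so the only
constraint from `Γ` is the national cycle limit `ncl i`). -/
noncomputable def natSize (I : IKEP) (i : Fin I.n) : ℕ :=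
  sSup {m | ∃ P, IsPacking I.G P ∧ (∀ l ∈ P, IsNationalTo I.G l i) ∧
    (∀ l ∈ P, (l.length : ℕ∞) ≤ I.prm.ncl i) ∧ packSize P = m}

/-- A (randomised) mechanism: for every IKEP instance it returns one `Γ`-cycle
packing according to a (finitely supported) probability distribution on the
set `𝒟_I` of all `Γ`-cycle packings of `G`. -/
structure Mechanism where
  dist : IKEP → (Finset (List ℕ) →₀ ℝ)
  nonneg : ∀ I P, 0 ≤ dist I P
  sum_one : ∀ I, ((dist I).sum fun _ p => p) = 1
  supp : ∀ I P, dist I P ≠ 0 → IsGammaPacking I P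

/-- The expected utility `U_i(ℳ(I))` of country `i`. -/
noncomputable def expUtil (M : Mechanism) (I : IKEP) (i : Fin I.n) : ℝ :=
  (M.dist I).sum fun P p => p * (packUtil I.G i P : ℝ)

/-- The expected social welfare `SW(ℳ(I)) = Σ_i U_i(ℳ(I))`: the expected size
of the returned packing. -/
noncomputable def sw (M : Mechanism) (I : IKEP) : ℝ :=
  (M.dist I).sum fun P p => p * (packSize P : ℝ)

/-- Individual rationality. -/
def IndRational (M : Mechanism) : Prop :=
  ∀ I : IKEP, ∀ i : Fin I.n, (natSize I i : ℝ) ≤ expUtil M I i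

/-- Efficiency. -/
def Efficient (M : Mechanism) : Prop :=
  ∀ I : IKEP, sw M I = (optSize I : ℝ)

/-- `Γ' ≤ᵢ Γ`: country `i` misreports by declaring (weakly) smaller
international segment size and segment number; all other parameters agree. -/
def ParamLE {n : ℕ} (i : Fin n) (Γ' Γ : Params n) : Prop :=
  Γ'.icl = Γ.icl ∧ Γ'.ncl = Γ.ncl ∧
    Γ'.iss i ≤ Γ.iss i ∧ Γ'.isn i ≤ Γ.isn i ∧
    (∀ h, h ≠ i → Γ'.iss h = Γ.iss h) ∧ (∀ h, h ≠ i → Γ'.isn h = Γ.isn h)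

/-- Incentive compatibility (with respect to segment size and segment number). -/
def IncentiveCompatible (M : Mechanism) : Prop :=
  ∀ I : IKEP, ∀ i : Fin I.n, ∀ Γ' : Params I.n, ParamLE i Γ' I.prm →
    expUtil M { I with prm := Γ' } i ≤ expUtil M I i

/-- An international `Γ`-cycle of the instance `I`. -/
def IsIntlGammaCycle (I : IKEP) (l : List ℕ) : Prop :=
  IsGammaCycle I.G I.prm l ∧ IsInternational I.G l

/-- `c_int(I)`: the maximum length of an international `Γ`-cycle of `G`. -/
noncomputable def cInt (I : IKEP) : ℕ :=
  sSup {s | ∃ l, IsIntlGammaCycle I l ∧ l.length = s}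



namespace IRLB

/-- Arc description of the construction graph (with `N = m + 2`). -/
def Arc (m a b : ℕ) : Prop :=
  (a + 1 < m + 2 ∧ b = a + 1) ∨ (a = m + 1 ∧ b = 0) ∨
    (a < m + 1 ∧ b = m + 2 + a) ∨ (m + 2 ≤ a ∧ a < 2 * m + 3 ∧ b = a - (m + 2))

instance (m a b : ℕ) : Decidable (Arc m a b) := by unfold Arc; infer_instance

lemma Arc.lt {m a b : ℕ} (h : Arc m a b) : a < 2 * m + 3 ∧ b < 2 * m + 3 := by
  unfold Arc at h; omega

def graphOf (m : ℕ) : PartGraph 2 where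
  verts := Finset.range (2 * m + 3)
  arcs := (Finset.range (2 * m + 3) ×ˢ Finset.range (2 * m + 3)).filter fun p => Arc m p.1 p.2
  arcs_mem := by
    intro p hp
    simp only [Finset.mem_filter, Finset.mem_product] at hp
    exact hp.1
  no_loops := by
    intro v hv
    simp only [Finset.mem_filter, Finset.mem_product] at hv
    have := hv.2; unfold Arc at this; omega
  country := fun v => if v < m + 2 then 0 else 1
  country_nonempty := by
    intro i
    fin_cases i
    · exact ⟨0, by simp, by simp⟩
    · refine ⟨m + 2, by simp; omega, by simp⟩

lemma mem_arcs {m a b : ℕ} : (a, b) ∈ (graphOf m).arcs ↔ Arc m a b := by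
  simp only [graphOf, Finset.mem_filter, Finset.mem_product, Finset.mem_range]
  exact ⟨fun h => h.2, fun h => ⟨⟨h.lt.1, h.lt.2⟩, h⟩⟩

lemma mem_verts {m v : ℕ} : v ∈ (graphOf m).verts ↔ v < 2 * m + 3 := by
  simp [graphOf]

lemma country_lt {m v : ℕ} (h : v < m + 2) : (graphOf m).country v = 0 := if_pos h

lemma country_ge {m v : ℕ} (h : m + 2 ≤ v) : (graphOf m).country v = 1 := if_neg (by omega)

def paramsTop : Params 2 where
  icl := ⊤
  ncl := fun _ => ⊤
  iss := fun _ => ⊤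
  isn := fun _ => ⊤
  icl_ne_one := by simp
  ncl_ne_one := fun _ => by simp
  iss_pos := fun _ => le_top
  isn_pos := fun _ => le_top

def instOf (m : ℕ) : IKEP := ⟨2, one_le_two, graphOf m, paramsTop⟩

/-- Country `0` of the instance, as an index of type `Fin (instOf m).n`. -/
def czero (m : ℕ) : Fin (instOf m).n := ⟨0, by norm_num [instOf]⟩

end IRLB

namespace IRLB

lemma cyc_mem {l : List ℕ} (hl : l ≠ []) (k : ℕ) : cyc l k ∈ l := by
  have h : k % l.length < l.length := Nat.mod_lt _ (List.length_pos_iff.2 hl)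
  rw [cyc, List.getD_eq_getElem _ _ h]
  exact List.getElem_mem h

lemma cyc_mod (l : List ℕ) (k : ℕ) : cyc l (k % l.length) = cyc l k := by
  simp [cyc]

lemma cyc_succ_mod (l : List ℕ) (k : ℕ) : cyc l (k % l.length + 1) = cyc l (k + 1) := by
  unfold cyc
  congr 1
  conv_rhs => rw [Nat.add_mod k 1]
  rw [Nat.add_mod (k % l.length) 1, Nat.mod_mod]

lemma cyc_inj {l : List ℕ} (hnd : l.Nodup) (hl : l ≠ []) {a b : ℕ}
    (h : cyc l a = cyc l b) : a % l.length = b % l.length := by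
  have ha : a % l.length < l.length := Nat.mod_lt _ (List.length_pos_iff.2 hl)
  have hb : b % l.length < l.length := Nat.mod_lt _ (List.length_pos_iff.2 hl)
  rw [cyc, cyc, List.getD_eq_getElem _ _ ha, List.getD_eq_getElem _ _ hb] at h
  have := (List.Nodup.get_inj_iff hnd (i := ⟨_, ha⟩) (j := ⟨_, hb⟩)).mp (by simpa using h)
  exact congrArg Fin.val this

lemma exists_pos {l : List ℕ} {v : ℕ} (hv : v ∈ l) : ∃ k < l.length, cyc l k = v := by
  obtain ⟨⟨k, hk⟩, rfl⟩ := List.mem_iff_get.mp hv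
  exact ⟨k, hk, by rw [cyc, Nat.mod_eq_of_lt hk, List.getD_eq_getElem _ _ hk]; rfl⟩

lemma cycle_ne_nil {m : ℕ} {l : List ℕ} (hc : IsCycle (graphOf m) l) : l ≠ [] := by
  have := hc.1; intro h; simp [h] at this

lemma cycle_arc {m : ℕ} {l : List ℕ} (hc : IsCycle (graphOf m) l) (k : ℕ) :
    Arc m (cyc l k) (cyc l (k + 1)) := by
  have hpos : 0 < l.length := by have := hc.1; omega
  have h := hc.2.2.2 (k % l.length) (Nat.mod_lt _ hpos)
  rw [cyc_mod, cyc_succ_mod] at h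
  exact mem_arcs.mp h

end IRLB

namespace IRLB

lemma cyc_pair0 (a b : ℕ) : cyc [a, b] 0 = a := by norm_num [cyc]
lemma cyc_pair1 (a b : ℕ) : cyc [a, b] 1 = b := by norm_num [cyc]
lemma cyc_pair2 (a b : ℕ) : cyc [a, b] 2 = a := by norm_num [cyc]

/-- Any cycle through a country-1 vertex is one of the international 2-cycles. -/
lemma intl_struct {m : ℕ} {l : List ℕ} {v : ℕ} (hc : IsCycle (graphOf m) l)
    (hv : v ∈ l) (hge : m + 2 ≤ v) :
    ∃ j < m + 1, v = m + 2 + j ∧ (l = [v, j] ∨ l = [j, v]) := by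
  have hne : l ≠ [] := cycle_ne_nil hc
  have hL : 2 ≤ l.length := hc.1
  obtain ⟨k, hk, hkv⟩ := exists_pos hv
  -- successor of v
  have h1 := cycle_arc hc k
  rw [hkv] at h1
  have hsucc : cyc l (k + 1) = v - (m + 2) := by unfold Arc at h1; omega
  -- predecessor of v
  have h2 := cycle_arc hc (k + l.length - 1)
  have he : k + l.length - 1 + 1 = k + l.length := by omega
  rw [he] at h2
  have hkL : cyc l (k + l.length) = v := by
    rw [← cyc_mod, Nat.add_mod_right, cyc_mod, hkv]
  rw [hkL] at h2
  have hpred : cyc l (k + l.length - 1) = v - (m + 2) := by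
    unfold Arc at h2; omega
  -- nodup forces length 2
  have hinj := cyc_inj hc.2.1 hne (hsucc.trans hpred.symm)
  have hLen : l.length = 2 := by
    have hrw : k + l.length - 1 = (k + 1) + (l.length - 2) := by omega
    rw [hrw] at hinj
    have hdvd : l.length ∣ l.length - 2 := by
      have h := (Nat.modEq_iff_dvd' (Nat.le_add_right (k + 1) (l.length - 2))).mp hinj
      simpa using h
    have : l.length - 2 = 0 ∨ l.length ≤ l.length - 2 := by
      rcases Nat.eq_zero_or_pos (l.length - 2) with h | h
      · exact Or.inl h
      · exact Or.inr (Nat.le_of_dvd h hdvd)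
    omega
  obtain ⟨x, y, rfl⟩ := List.length_eq_two.mp hLen
  have hx := cycle_arc hc 0
  have hy := cycle_arc hc 1
  rw [cyc_pair0, cyc_pair1] at hx
  rw [cyc_pair1, cyc_pair2] at hy
  simp only [List.mem_cons, List.not_mem_nil, or_false] at hv
  rcases hv with rfl | rfl
  · have : y = v - (m + 2) ∧ v - (m + 2) < m + 1 := by unfold Arc at hx; omega
    exact ⟨v - (m + 2), this.2, by unfold Arc at hx; omega, Or.inl (by rw [this.1])⟩
  · have : x = v - (m + 2) ∧ v - (m + 2) < m + 1 := by unfold Arc at hy; omega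
    exact ⟨v - (m + 2), this.2, by unfold Arc at hy; omega, Or.inr (by rw [this.1])⟩

/-- Any cycle entirely inside country 0 passes through every country-0 vertex. -/
lemma nat_all {m : ℕ} {l : List ℕ} (hc : IsCycle (graphOf m) l)
    (hall : ∀ v ∈ l, v < m + 2) : ∀ j < m + 2, j ∈ l := by
  have hne : l ≠ [] := cycle_ne_nil hc
  obtain ⟨v0, hv0⟩ := List.exists_mem_of_ne_nil l hne
  have hstep : ∀ w ∈ l, (w + 1 < m + 2 ∧ w + 1 ∈ l) ∨ (w = m + 1 ∧ 0 ∈ l) := by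
    intro w hw
    obtain ⟨k, hk, hkw⟩ := exists_pos hw
    have h1 := cycle_arc hc k
    rw [hkw] at h1
    have hmem := cyc_mem hne (k + 1)
    have hlt := hall _ hmem
    have hwlt := hall _ hw
    rcases h1 with ⟨ha, hb⟩ | ⟨ha, hb⟩ | ⟨ha, hb⟩ | ⟨ha, _, _⟩
    · exact Or.inl ⟨ha, hb ▸ hmem⟩
    · exact Or.inr ⟨ha, hb ▸ hmem⟩
    · omega
    · omega
  have key : ∀ d, (v0 + d) % (m + 2) ∈ l := by
    intro d
    induction d with
    | zero => simpa [Nat.mod_eq_of_lt (hall v0 hv0)] using hv0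
    | succ d ih =>
      have hwl : (v0 + d) % (m + 2) < m + 2 := Nat.mod_lt _ (by omega)
      have hre : (v0 + (d + 1)) % (m + 2) = ((v0 + d) % (m + 2) + 1) % (m + 2) := by
        rw [← Nat.add_assoc, Nat.add_mod (v0 + d) 1, Nat.add_mod ((v0 + d) % (m + 2)) 1,
          Nat.mod_mod]
      rcases hstep _ ih with ⟨h1, h2⟩ | ⟨h1, h2⟩
      · rw [hre, Nat.mod_eq_of_lt h1]; exact h2
      · rw [hre, h1]; simpa [Nat.mod_self] using h2
  intro j hj
  have hv0lt : v0 < m + 2 := hall _ hv0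
  have := key (m + 2 + j - v0)
  rw [show v0 + (m + 2 + j - v0) = m + 2 + j by omega, Nat.add_mod_left,
    Nat.mod_eq_of_lt hj] at this
  exact this

end IRLB

namespace IRLB

/-- Counting: disjoint nodup cycles use each vertex at most once. -/
lemma sum_filter_length_le {n : ℕ} {G : PartGraph n} {P : Finset (List ℕ)}
    (hP : IsPacking G P) (q : ℕ → Bool) :
    ∑ l ∈ P, (l.filter q).length ≤ (G.verts.filter fun v => q v = true).card := by
  have hnd : ∀ l ∈ P, (l.filter q).Nodup := fun l hl => ((hP.1 l hl).2.1).filter _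
  calc ∑ l ∈ P, (l.filter q).length
      = ∑ l ∈ P, (l.filter q).toFinset.card :=
        Finset.sum_congr rfl fun l hl => (List.toFinset_card_of_nodup (hnd l hl)).symm
    _ = (P.biUnion fun l => (l.filter q).toFinset).card := by
        refine (Finset.card_biUnion ?_).symm
        intro x hx y hy hxy
        rw [Function.onFun, Finset.disjoint_left]
        intro v hv hv'
        rw [List.mem_toFinset, List.mem_filter] at hv hv'
        exact hP.2 x hx y hy hxy v hv.1 hv'.1
    _ ≤ _ := by
        refine Finset.card_le_card ?_
        intro v hv
        rw [Finset.mem_biUnion] at hv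
        obtain ⟨l, hl, hvl⟩ := hv
        rw [List.mem_toFinset, List.mem_filter] at hvl
        rw [Finset.mem_filter]
        exact ⟨(hP.1 l hl).2.2.1 v hvl.1, hvl.2⟩

lemma packSize_le {m : ℕ} {P : Finset (List ℕ)} (hP : IsPacking (graphOf m) P) :
    packSize P ≤ 2 * m + 3 := by
  have h := sum_filter_length_le hP (fun _ => true)
  simp only [List.filter_true] at h
  calc packSize P = ∑ l ∈ P, l.length := rfl
    _ ≤ _ := h
    _ ≤ (graphOf m).verts.card := Finset.card_filter_le _ _
    _ = 2 * m + 3 := by simp [graphOf]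

lemma card_V0 {m : ℕ} :
    ((graphOf m).verts.filter fun v => (decide ((graphOf m).country v = 0)) = true).card
      = m + 2 := by
  have : ((graphOf m).verts.filter fun v => (decide ((graphOf m).country v = 0)) = true)
      = Finset.range (m + 2) := by
    ext v
    simp only [Finset.mem_filter, Finset.mem_range, mem_verts, decide_eq_true_eq]
    constructor
    · rintro ⟨h1, h2⟩
      by_contra h
      rw [country_ge (by omega)] at h2
      exact absurd h2 (by decide)
    · intro h
      exact ⟨by omega, country_lt h⟩
  rw [this, Finset.card_range]

lemma card_V1 {m : ℕ} :
    ((graphOf m).verts.filter fun v => (decide ((graphOf m).country v = 1)) = true).card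
      = m + 1 := by
  have : ((graphOf m).verts.filter fun v => (decide ((graphOf m).country v = 1)) = true)
      = Finset.Ico (m + 2) (2 * m + 3) := by
    ext v
    simp only [Finset.mem_filter, Finset.mem_Ico, mem_verts, decide_eq_true_eq]
    constructor
    · rintro ⟨h1, h2⟩
      refine ⟨?_, h1⟩
      by_contra h
      rw [country_lt (by omega)] at h2
      exact absurd h2 (by decide)
    · rintro ⟨h1, h2⟩
      exact ⟨h2, country_ge h1⟩
  rw [this, Nat.card_Ico]
  omega

lemma packUtil_le0 {m : ℕ} {P : Finset (List ℕ)} (hP : IsPacking (graphOf m) P) :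
    packUtil (graphOf m) 0 P ≤ m + 2 :=
  le_of_le_of_eq (sum_filter_length_le hP _) card_V0

lemma packUtil_le1 {m : ℕ} {P : Finset (List ℕ)} (hP : IsPacking (graphOf m) P) :
    packUtil (graphOf m) 1 P ≤ m + 1 :=
  le_of_le_of_eq (sum_filter_length_le hP _) card_V1

lemma util_split {m : ℕ} (l : List ℕ) :
    cycUtil (graphOf m) 0 l + cycUtil (graphOf m) 1 l = l.length := by
  induction l with
  | nil => simp [cycUtil]
  | cons v t ih =>
    by_cases h : v < m + 2
    · have h0 := country_lt (m := m) h
      simp only [cycUtil, List.filter_cons, h0, decide_eq_true_eq] at ih ⊢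
      norm_num
      omega
    · have h1 := country_ge (m := m) (v := v) (by omega)
      simp only [cycUtil, List.filter_cons, h1, decide_eq_true_eq] at ih ⊢
      norm_num
      omega

end IRLB

namespace IRLB

lemma cycUtil_pair {m j : ℕ} (hj : j < m + 1) :
    cycUtil (graphOf m) 0 [m + 2 + j, j] = 1 ∧ cycUtil (graphOf m) 1 [m + 2 + j, j] = 1 ∧
    cycUtil (graphOf m) 0 [j, m + 2 + j] = 1 ∧ cycUtil (graphOf m) 1 [j, m + 2 + j] = 1 := by
  have h0 := country_lt (m := m) (v := j) (by omega)
  have h1 := country_ge (m := m) (v := m + 2 + j) (by omega)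
  refine ⟨?_, ?_, ?_, ?_⟩ <;>
    simp [cycUtil, List.filter_cons, h0, h1]

lemma key_bound {m : ℕ} {P : Finset (List ℕ)} (hP : IsPacking (graphOf m) P) :
    packSize P + m * packUtil (graphOf m) 0 P ≤ (m + 2) * (m + 1) := by
  have hsize : packSize P = packUtil (graphOf m) 0 P + packUtil (graphOf m) 1 P := by
    rw [packSize, packUtil, packUtil, ← Finset.sum_add_distrib]
    exact Finset.sum_congr rfl fun l _ => (util_split l).symm
  by_cases hA : ∀ l ∈ P, ∀ v ∈ l, v < m + 2
  · -- no international vertex used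
    have h1 : packUtil (graphOf m) 1 P = 0 := by
      refine Finset.sum_eq_zero fun l hl => ?_
      rw [cycUtil, List.length_eq_zero_iff]
      rw [List.filter_eq_nil_iff]
      intro v hv
      rw [country_lt (hA l hl v hv)]
      simp
    have h0 := packUtil_le0 hP
    have : packSize P + m * packUtil (graphOf m) 0 P
        = (m + 1) * packUtil (graphOf m) 0 P := by rw [hsize, h1]; ring
    rw [this]
    calc (m + 1) * packUtil (graphOf m) 0 P ≤ (m + 1) * (m + 2) :=
          Nat.mul_le_mul_left _ h0
      _ = (m + 2) * (m + 1) := Nat.mul_comm _ _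
  · -- some cycle uses a country-1 vertex; then every cycle is an intl 2-cycle
    push_neg at hA
    obtain ⟨l0, hl0, v0, hv0, hv0ge⟩ := hA
    obtain ⟨j0, hj0, hv0eq, hl0form⟩ := intl_struct (hP.1 l0 hl0) hv0 (by omega)
    have hj0mem : j0 ∈ l0 := by rcases hl0form with rfl | rfl <;> simp
    have hall : ∀ l ∈ P, ∃ v ∈ l, m + 2 ≤ v := by
      intro l hl
      by_contra h
      push_neg at h
      have hlt : ∀ v ∈ l, v < m + 2 := fun v hv => by have := h v hv; omega
      have hj0l : j0 ∈ l := nat_all (hP.1 l hl) hlt j0 (by omega)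
      have hne : l ≠ l0 := by
        rintro rfl
        exact absurd (hlt v0 hv0) (by omega)
      exact hP.2 l hl l0 hl0 hne j0 hj0l hj0mem
    have hform : ∀ l ∈ P, cycUtil (graphOf m) 0 l = 1 ∧ cycUtil (graphOf m) 1 l = 1 := by
      intro l hl
      obtain ⟨v, hv, hvge⟩ := hall l hl
      obtain ⟨j, hj, rfl, hc⟩ := intl_struct (hP.1 l hl) hv hvge
      obtain ⟨c1, c2, c3, c4⟩ := cycUtil_pair (m := m) hj
      rcases hc with rfl | rfl
      · exact ⟨c1, c2⟩
      · exact ⟨c3, c4⟩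
    have hu0 : packUtil (graphOf m) 0 P = P.card := by
      rw [packUtil, Finset.card_eq_sum_ones]
      exact Finset.sum_congr rfl fun l hl => (hform l hl).1
    have hu1 : packUtil (graphOf m) 1 P = P.card := by
      rw [packUtil, Finset.card_eq_sum_ones]
      exact Finset.sum_congr rfl fun l hl => (hform l hl).2
    have hcard : P.card ≤ m + 1 := by
      have := packUtil_le1 hP
      omega
    have : packSize P + m * packUtil (graphOf m) 0 P = (m + 2) * P.card := by
      rw [hsize, hu0, hu1]; ring
    rw [this]
    exact Nat.mul_le_mul_left _ hcard

end IRLB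

namespace IRLB

lemma isCycle_pair {m j : ℕ} (hj : j < m + 1) :
    IsCycle (graphOf m) [j, m + 2 + j] := by
  refine ⟨by simp, by simp, ?_, ?_⟩
  · intro v hv
    simp only [List.mem_cons, List.not_mem_nil, or_false] at hv
    rw [mem_verts]
    rcases hv with rfl | rfl <;> omega
  · intro k hk
    have hk2 : k = 0 ∨ k = 1 := by simp at hk; omega
    rcases hk2 with rfl | rfl
    · rw [cyc_pair0, cyc_pair1, mem_arcs]
      exact Or.inr (Or.inr (Or.inl ⟨hj, rfl⟩))
    · rw [cyc_pair1, cyc_pair2, mem_arcs]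
      refine Or.inr (Or.inr (Or.inr ⟨by omega, by omega, by omega⟩))

lemma isIntl_pair {m j : ℕ} (hj : j < m + 1) :
    IsInternational (graphOf m) [j, m + 2 + j] := by
  rintro ⟨i, hi⟩
  have h1 := hi j (by simp)
  have h2 := hi (m + 2 + j) (by simp)
  rw [country_lt (by omega)] at h1
  rw [country_ge (by omega)] at h2
  rw [← h1] at h2
  exact absurd h2 (by decide)

lemma isGamma_pair {m j : ℕ} (hj : j < m + 1) :
    IsGammaCycle (graphOf m) paramsTop [j, m + 2 + j] :=
  ⟨isCycle_pair hj, Or.inr ⟨isIntl_pair hj, le_top, fun _ _ _ _ => le_top, fun _ => le_top⟩⟩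

lemma intl_witness (m : ℕ) : IsIntlGammaCycle (instOf m) [0, m + 2] := by
  have h := isGamma_pair (m := m) (j := 0) (by omega)
  have h' := isIntl_pair (m := m) (j := 0) (by omega)
  exact ⟨h, h'⟩

/-- The long national cycle. -/
lemma isCycle_range (m : ℕ) : IsCycle (graphOf m) (List.range (m + 2)) := by
  refine ⟨by simp, List.nodup_range, ?_, ?_⟩
  · intro v hv
    rw [List.mem_range] at hv
    rw [mem_verts]; omega
  · intro k hk
    rw [List.length_range] at hk
    have hcy : ∀ a : ℕ, cyc (List.range (m + 2)) a = a % (m + 2) := by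
      intro a
      have ha : a % (m + 2) < m + 2 := Nat.mod_lt _ (by omega)
      rw [cyc, List.length_range, List.getD_eq_getElem _ _ (by simpa using ha),
        List.getElem_range]
    rw [hcy, hcy, Nat.mod_eq_of_lt hk, mem_arcs]
    by_cases h : k + 1 < m + 2
    · rw [Nat.mod_eq_of_lt h]
      exact Or.inl ⟨h, rfl⟩
    · have hk1 : k = m + 1 := by omega
      rw [hk1]
      simp [Nat.mod_self]
      unfold Arc
      omega

lemma natSize_ge (m : ℕ) : m + 2 ≤ natSize (instOf m) (czero m) := by
  have hmem : m + 2 ∈ {mm | ∃ P, IsPacking (instOf m).G P ∧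
      (∀ l ∈ P, IsNationalTo (instOf m).G l (czero m)) ∧
      (∀ l ∈ P, (l.length : ℕ∞) ≤ (instOf m).prm.ncl (czero m)) ∧ packSize P = mm} := by
    refine ⟨{List.range (m + 2)}, ⟨?_, ?_⟩, ?_, ?_, ?_⟩
    · intro l hl
      rw [Finset.mem_singleton] at hl
      subst hl
      exact isCycle_range m
    · intro l hl l' hl' hne
      rw [Finset.mem_singleton] at hl hl'
      subst hl; subst hl'
      exact absurd rfl hne
    · intro l hl
      rw [Finset.mem_singleton] at hl
      subst hl
      intro v hv
      rw [List.mem_range] at hv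
      exact country_lt hv
    · intro l hl
      exact le_top
    · simp [packSize]
  refine le_csSup ⟨2 * m + 3, ?_⟩ hmem
  rintro x ⟨P, hP, -, -, rfl⟩
  exact packSize_le hP

lemma optSize_ge (m : ℕ) : 2 * (m + 1) ≤ optSize (instOf m) := by
  classical
  set f : ℕ → List ℕ := fun j => [j, m + 2 + j] with hf
  have hinj : ∀ a ∈ Finset.range (m + 1), ∀ b ∈ Finset.range (m + 1), f a = f b → a = b := by
    intro a _ b _ h
    simp only [hf, List.cons.injEq] at h
    exact h.1
  have hmem : 2 * (m + 1) ∈ {mm | ∃ P, IsGammaPacking (instOf m) P ∧ packSize P = mm} := by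
    refine ⟨(Finset.range (m + 1)).image f, ⟨⟨?_, ?_⟩, ?_⟩, ?_⟩
    · intro l hl
      rw [Finset.mem_image] at hl
      obtain ⟨j, hj, rfl⟩ := hl
      rw [Finset.mem_range] at hj
      exact isCycle_pair hj
    · intro l hl l' hl' hne v hv hv'
      rw [Finset.mem_image] at hl hl'
      obtain ⟨j, hj, rfl⟩ := hl
      obtain ⟨j', hj', rfl⟩ := hl'
      have hjj : j ≠ j' := fun h => hne (by rw [h])
      rw [Finset.mem_range] at hj hj'
      simp only [hf, List.mem_cons, List.not_mem_nil, or_false] at hv hv'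
      omega
    · intro l hl
      rw [Finset.mem_image] at hl
      obtain ⟨j, hj, rfl⟩ := hl
      rw [Finset.mem_range] at hj
      exact isGamma_pair hj
    · rw [packSize, Finset.sum_image hinj]
      have hlen : ∀ j ∈ Finset.range (m + 1), (f j).length = 2 := fun j _ => by simp [hf]
      rw [Finset.sum_congr rfl hlen, Finset.sum_const, Finset.card_range, smul_eq_mul,
        Nat.mul_comm]
  refine le_csSup ⟨2 * m + 3, ?_⟩ hmem
  rintro x ⟨P, hP, rfl⟩
  exact packSize_le hP.1

lemma cInt_le (m : ℕ) : cInt (instOf m) ≤ 2 := by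
  refine csSup_le ⟨2, [0, m + 2], intl_witness m, rfl⟩ ?_
  rintro s ⟨l, ⟨⟨hcyc, -⟩, hintl⟩, rfl⟩
  have hex : ∃ v ∈ l, m + 2 ≤ v := by
    by_contra h
    push_neg at h
    exact hintl ⟨czero m, fun v hv => country_lt (by have := h v hv; omega)⟩
  obtain ⟨v, hv, hge⟩ := hex
  obtain ⟨j, hj, -, hc⟩ := intl_struct hcyc hv hge
  rcases hc with rfl | rfl <;> simp

end IRLB

namespace IRLB

lemma sw_nonneg (M : Mechanism) (I : IKEP) : 0 ≤ sw M I := by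
  rw [sw, Finsupp.sum]
  exact Finset.sum_nonneg fun P _ => mul_nonneg (M.nonneg I P) (Nat.cast_nonneg _)

lemma sw_add_le (M : Mechanism) (m : ℕ) :
    sw M (instOf m) + (m : ℝ) * expUtil M (instOf m) (czero m)
      ≤ ((m : ℝ) + 2) * ((m : ℝ) + 1) := by
  classical
  rw [sw, expUtil, Finsupp.sum, Finsupp.sum, Finset.mul_sum, ← Finset.sum_add_distrib]
  have h1 : ∀ P ∈ (M.dist (instOf m)).support,
      M.dist (instOf m) P * (packSize P : ℝ)
        + (m : ℝ) * (M.dist (instOf m) P * (packUtil (instOf m).G (czero m) P : ℝ))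
      ≤ M.dist (instOf m) P * (((m : ℝ) + 2) * ((m : ℝ) + 1)) := by
    intro P hP
    have hpack : IsPacking (graphOf m) P :=
      (M.supp (instOf m) P (Finsupp.mem_support_iff.mp hP)).1
    have heq : packUtil (instOf m).G (czero m) P = packUtil (graphOf m) 0 P := rfl
    have hkey : (packSize P : ℝ) + (m : ℝ) * (packUtil (instOf m).G (czero m) P : ℝ)
        ≤ ((m : ℝ) + 2) * ((m : ℝ) + 1) := by
      have h := key_bound hpack
      rw [heq]
      exact_mod_cast h
    have hp := M.nonneg (instOf m) P
    nlinarith [mul_le_mul_of_nonneg_left hkey hp]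
  calc ∑ P ∈ (M.dist (instOf m)).support,
        (M.dist (instOf m) P * (packSize P : ℝ)
          + (m : ℝ) * (M.dist (instOf m) P * (packUtil (instOf m).G (czero m) P : ℝ)))
      ≤ ∑ P ∈ (M.dist (instOf m)).support,
          M.dist (instOf m) P * (((m : ℝ) + 2) * ((m : ℝ) + 1)) := Finset.sum_le_sum h1
    _ = (((m : ℝ) + 2) * ((m : ℝ) + 1)) * ∑ P ∈ (M.dist (instOf m)).support,
          M.dist (instOf m) P := by
        rw [Finset.mul_sum]
        exact Finset.sum_congr rfl fun _ _ => mul_comm _ _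
    _ = ((m : ℝ) + 2) * ((m : ℝ) + 1) := by
        have h := M.sum_one (instOf m)
        rw [Finsupp.sum] at h
        rw [h, mul_one]

lemma sw_le (M : Mechanism) (hIR : IndRational M) (m : ℕ) :
    sw M (instOf m) ≤ (m : ℝ) + 2 := by
  have hA : ((m : ℝ) + 2) ≤ expUtil M (instOf m) (czero m) := by
    have h1 := hIR (instOf m) (czero m)
    have h2 : ((m + 2 : ℕ) : ℝ) ≤ (natSize (instOf m) (czero m) : ℝ) := by
      exact_mod_cast natSize_ge m
    push_cast at h2
    linarith
  have h := sw_add_le M m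
  have h3 := mul_le_mul_of_nonneg_left hA (by positivity : (0 : ℝ) ≤ (m : ℝ))
  nlinarith

end IRLB

/-- No individually rational mechanism has an approximation
ratio of at most `(1 - ε)·c_int`, for any `ε > 0`: there is an instance with
an international `Γ`-cycle on which `opt(I) > (1 - ε)·c_int(I)·SW(ℳ(I))`. -/
theorem IR_lower_bound_cInt (ε : ℝ) (hε : 0 < ε) (M : Mechanism)
    (hIR : IndRational M) :
    ∃ I : IKEP, (∃ l, IsIntlGammaCycle I l) ∧
      (1 - ε) * (cInt I : ℝ) * sw M I < (optSize I : ℝ) := by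
  set m : ℕ := ⌈1 / ε⌉₊ with hm
  refine ⟨IRLB.instOf m, ⟨[0, m + 2], IRLB.intl_witness m⟩, ?_⟩
  have hc2 : (cInt (IRLB.instOf m) : ℝ) ≤ 2 := by exact_mod_cast IRLB.cInt_le m
  have hc0 : (0 : ℝ) ≤ (cInt (IRLB.instOf m) : ℝ) := Nat.cast_nonneg _
  have hs0 : 0 ≤ sw M (IRLB.instOf m) := IRLB.sw_nonneg M _
  have hsle : sw M (IRLB.instOf m) ≤ (m : ℝ) + 2 := IRLB.sw_le M hIR m
  have hopt : 2 * (m : ℝ) + 2 ≤ (optSize (IRLB.instOf m) : ℝ) := by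
    have h := IRLB.optSize_ge m
    have h2 : ((2 * (m + 1) : ℕ) : ℝ) ≤ (optSize (IRLB.instOf m) : ℝ) := by exact_mod_cast h
    push_cast at h2
    linarith
  have hm0 : (0 : ℝ) ≤ (m : ℝ) := Nat.cast_nonneg _
  have hεm : 1 < ε * ((m : ℝ) + 2) := by
    have h1 : (1 : ℝ) / ε ≤ (m : ℝ) := by rw [hm]; exact_mod_cast Nat.le_ceil (1 / ε)
    have h2 : (1 : ℝ) / ε < (m : ℝ) + 2 := by linarith
    calc (1 : ℝ) = ε * (1 / ε) := by field_simp
      _ < ε * ((m : ℝ) + 2) := mul_lt_mul_of_pos_left h2 hε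
  rcases le_or_gt (1 - ε) 0 with hle | hpos
  · have h1 : (1 - ε) * ((cInt (IRLB.instOf m) : ℝ) * sw M (IRLB.instOf m)) ≤ 0 :=
      mul_nonpos_of_nonpos_of_nonneg hle (mul_nonneg hc0 hs0)
    rw [mul_assoc]
    linarith
  · have hcs : (cInt (IRLB.instOf m) : ℝ) * sw M (IRLB.instOf m) ≤ 2 * ((m : ℝ) + 2) := by
      nlinarith
    have h2 := mul_le_mul_of_nonneg_left hcs hpos.le
    rw [mul_assoc]
    nlinarith
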